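/- For any positive integers n and K, if f_{k,i} ≥ 0 for all k = 1,…,K and i = 1,…,n, then the ensemble exponential loss satisfies L^exp = (1/n) Σ_{i=1}^n exp(−(1/K) Σ_{k=1}^K f_{k,i}) ≤ Π_{k=1}^K R_k^{1/K} ≤ 1, where R_k = (1/n) Σ_{i=1}^n exp(−f_{k,i}). -/
import Mathlib


open Real Finset

/-- K-fold Hölder / generalized Cauchy inequality via weighted AM-GM. -/
lemma sum_prod_rpow_le (n K : ℕ) (hK : 0 < K) (g : Fin K → Fin n → ℝ)
    (hg : ∀ k i, 0 < g k i) :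
    ∑ i : Fin n, ∏ k : Fin K, (g k i) ^ ((1 : ℝ) / K) ≤
      ∏ k : Fin K, (∑ i : Fin n, g k i) ^ ((1 : ℝ) / K) := by
  rcases Nat.eq_zero_or_pos n with rfl | hn
  · simp
    positivity
  set S : Fin K → ℝ := fun k => ∑ i : Fin n, g k i with hS
  have hSpos : ∀ k, 0 < S k := fun k =>
    Finset.sum_pos (fun i _ => hg k i) (Finset.univ_nonempty_iff.mpr ⟨⟨0, hn⟩⟩)
  have key : ∑ i : Fin n, ∏ k : Fin K, (g k i / S k) ^ ((1 : ℝ) / K) ≤ 1 := by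
    have h1 : ∀ i : Fin n, ∏ k : Fin K, (g k i / S k) ^ ((1 : ℝ) / K) ≤
        ∑ k : Fin K, (1 / (K : ℝ)) * (g k i / S k) := by
      intro i
      refine Real.geom_mean_le_arith_mean_weighted Finset.univ
        (fun _ => (1 : ℝ) / K) (fun k => g k i / S k) (fun k _ => by positivity) ?_
        (fun k _ => le_of_lt (div_pos (hg k i) (hSpos k)))
      rw [Finset.sum_const, Finset.card_univ, Fintype.card_fin, nsmul_eq_mul]
      field_simp
    calc ∑ i : Fin n, ∏ k : Fin K, (g k i / S k) ^ ((1 : ℝ) / K)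
        ≤ ∑ i : Fin n, ∑ k : Fin K, (1 / (K : ℝ)) * (g k i / S k) :=
          Finset.sum_le_sum fun i _ => h1 i
      _ = ∑ k : Fin K, (1 / (K : ℝ)) * ((∑ i : Fin n, g k i) / S k) := by
          rw [Finset.sum_comm]
          refine Finset.sum_congr rfl fun k _ => ?_
          rw [← Finset.mul_sum, ← Finset.sum_div]
      _ = 1 := by
          have : ∀ k : Fin K, (1 / (K : ℝ)) * ((∑ i : Fin n, g k i) / S k)
              = 1 / (K : ℝ) := fun k => by
            rw [hS, div_self (hSpos k).ne', mul_one]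
          rw [Finset.sum_congr rfl fun k _ => this k, Finset.sum_const,
            Finset.card_univ, Fintype.card_fin, nsmul_eq_mul]
          field_simp
  have expand : ∀ i : Fin n, ∏ k : Fin K, (g k i / S k) ^ ((1 : ℝ) / K)
      = (∏ k : Fin K, (g k i) ^ ((1 : ℝ) / K)) /
        (∏ k : Fin K, (S k) ^ ((1 : ℝ) / K)) := by
    intro i
    rw [← Finset.prod_div_distrib]
    exact Finset.prod_congr rfl fun k _ =>
      Real.div_rpow (hg k i).le (hSpos k).le _
  have hPpos : 0 < ∏ k : Fin K, (S k) ^ ((1 : ℝ) / K) :=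
    Finset.prod_pos fun k _ => Real.rpow_pos_of_pos (hSpos k) _
  have := key
  simp only [expand, ← Finset.sum_div] at this
  calc ∑ i : Fin n, ∏ k : Fin K, (g k i) ^ ((1 : ℝ) / K)
      = ((∑ i : Fin n, ∏ k : Fin K, (g k i) ^ ((1 : ℝ) / K)) /
          (∏ k : Fin K, (S k) ^ ((1 : ℝ) / K))) *
          (∏ k : Fin K, (S k) ^ ((1 : ℝ) / K)) := by
        field_simp
    _ ≤ 1 * (∏ k : Fin K, (S k) ^ ((1 : ℝ) / K)) := by
        exact mul_le_mul_of_nonneg_right this hPpos.le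
    _ = _ := one_mul _

/-- With nonnegative scores, the ensemble exponential loss is bounded by the geometric
mean of the snapshot losses, which in turn is at most 1. -/
theorem ensemble_exp_loss_bound_le_one
    (n K : ℕ) (hn : 0 < n) (hK : 0 < K) (f : Fin K → Fin n → ℝ)
    (hf : ∀ k i, 0 ≤ f k i) :
    (1 / (n : ℝ)) * ∑ i : Fin n, Real.exp (-( (1 / (K : ℝ)) * ∑ k : Fin K, f k i)) ≤
      ∏ k : Fin K, ((1 / (n : ℝ)) * ∑ i : Fin n, Real.exp (-(f k i))) ^ ((1 : ℝ) / K) ∧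
    ∏ k : Fin K, ((1 / (n : ℝ)) * ∑ i : Fin n, Real.exp (-(f k i))) ^ ((1 : ℝ) / K) ≤ 1 := by
  have hnR : (0 : ℝ) < n := by exact_mod_cast hn
  have hKR : (0 : ℝ) < K := by exact_mod_cast hK
  set g : Fin K → Fin n → ℝ := fun k i => Real.exp (-(f k i)) with hg
  have hgpos : ∀ k i, 0 < g k i := fun k i => Real.exp_pos _
  -- rewrite the middle term
  have hmid : ∏ k : Fin K, ((1 / (n : ℝ)) * ∑ i : Fin n, g k i) ^ ((1 : ℝ) / K)
      = (1 / (n : ℝ)) * ∏ k : Fin K, (∑ i : Fin n, g k i) ^ ((1 : ℝ) / K) := by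
    have h1 : ∀ k : Fin K, ((1 / (n : ℝ)) * ∑ i : Fin n, g k i) ^ ((1 : ℝ) / K)
        = ((1 / (n : ℝ)) ^ ((1 : ℝ) / K)) * (∑ i : Fin n, g k i) ^ ((1 : ℝ) / K) :=
      fun k => Real.mul_rpow (by positivity)
        (Finset.sum_nonneg fun i _ => (hgpos k i).le)
    rw [Finset.prod_congr rfl fun k _ => h1 k, Finset.prod_mul_distrib,
      Finset.prod_const, Finset.card_univ, Fintype.card_fin,
      ← Real.rpow_natCast ((1 / (n : ℝ)) ^ ((1 : ℝ) / K)) K,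
      ← Real.rpow_mul (by positivity), one_div_mul_cancel hKR.ne',
      Real.rpow_one, one_div]
  constructor
  · rw [hmid]
    have hexp : ∀ i : Fin n, Real.exp (-((1 / (K : ℝ)) * ∑ k : Fin K, f k i))
        = ∏ k : Fin K, (g k i) ^ ((1 : ℝ) / K) := by
      intro i
      have : ∀ k : Fin K, (g k i) ^ ((1 : ℝ) / K)
          = Real.exp ((1 / (K : ℝ)) * (-(f k i))) := fun k => by
        rw [hg]
        rw [← Real.exp_mul]
        ring_nf
      rw [Finset.prod_congr rfl fun k _ => this k, ← Real.exp_sum]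
      congr 1
      rw [← Finset.mul_sum, Finset.sum_neg_distrib]
      ring
    rw [Finset.sum_congr rfl fun i _ => hexp i]
    exact mul_le_mul_of_nonneg_left (sum_prod_rpow_le n K hK g hgpos)
      (by positivity)
  · refine Finset.prod_le_one (fun k _ => by positivity) fun k _ => ?_
    refine Real.rpow_le_one (by positivity) ?_ (by positivity)
    rw [one_div, inv_mul_le_iff₀ hnR, mul_one]
    calc ∑ i : Fin n, g k i ≤ ∑ i : Fin n, 1 :=
          Finset.sum_le_sum fun i _ => by
            rw [hg]; exact Real.exp_le_one_iff.mpr (by simpa using hf k i)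
      _ = n := by simp
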